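/- Let P = Q' ⊕ a ⊕ b ⊕ Q'' + P_2 and P' = P with the covering relation a ≺ b removed. For π ∈ L(P), let π̂ ∈ L(P') be obtained by interchanging a and b. Then L(P') = {π, π̂ : π ∈ L(P)}, so |L(P')| = 2|L(P)|. Moreover in the promotion graphs: (1) if k ≺_P a and π →^{x_k} π̃ in G_P, then π →^{x_k} π̃̂ and π̂ →^{x_k} π̃ in G_{P'}; (2) if k ⪯̸_P a,b and π →^{x_k} π̃ in G_P, then π →^{x_k} π̃ and π̂ →^{x_k} π̃̂ in G_{P'}; (3) if π →^{x_a} π̃ in G_P, then π →^{x_a} π̃̂ and π̂ →^{x_b} π̃ in G_{P'}; (4) if π →^{x_b} π̃ in G_P, then π →^{x_b} π̃ and π̂ →^{x_a} π̃̂ in G_{P'}. -/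

import Mathlib

open Matrix Kronecker
open scoped Classical

namespace PromoMC

/-- A listing of the elements of a finite set `α`. -/
abbrev Listing (α : Type*) [Fintype α] := Fin (Fintype.card α) ≃ α

/-- `π` is a linear extension of the poset `α`: `π i < π j` in `α` implies `i < j`. -/
def IsLinExt {α : Type*} [Fintype α] [PartialOrder α] (π : Listing α) : Prop :=
  ∀ i j, π i < π j → i < j

variable {α : Type*} [Fintype α] [PartialOrder α]

/-- The operator `τ_i`: swap positions `i` and `i+1` (0-indexed) of a listing when
the corresponding entries are incomparable. -/
noncomputable def tau (i : ℕ) (π : Listing α) : Listing α :=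
  if h : i + 1 < Fintype.card α then
    if ¬ π ⟨i, by omega⟩ ≤ π ⟨i + 1, h⟩ ∧ ¬ π ⟨i + 1, h⟩ ≤ π ⟨i, by omega⟩ then
      (Equiv.swap (⟨i, by omega⟩ : Fin (Fintype.card α)) ⟨i + 1, h⟩).trans π
    else π
  else π

/-- The extended promotion operator `∂_i = τ_{n-1} ⋯ τ_{i+1} τ_i` (0-indexed). -/
noncomputable def promo (i : ℕ) (π : Listing α) : Listing α :=
  ((List.range (Fintype.card α)).drop i).foldl (fun σ j => tau j σ) π

/-- The set of linear extensions of a finite poset. -/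
def LinExt (α : Type*) [Fintype α] [PartialOrder α] := {π : Listing α // IsLinExt π}

noncomputable instance : Fintype (LinExt α) := by unfold LinExt; infer_instance

noncomputable instance : DecidableEq (LinExt α) := Classical.decEq _

/-- The transition matrix of the promotion Markov chain: the `(π, π')` entry is the
sum of `x (π i)` over all positions `i` with `∂_i π = π'`. -/
noncomputable def promoMatrix (x : α → ℝ) : Matrix (LinExt α) (LinExt α) ℝ :=
  fun π π' => ∑ i : Fin (Fintype.card α), if promo (i : ℕ) π.1 = π'.1 then x (π.1 i) else 0

/-- A discrete (antichain) order on a type. -/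
def Discrete (β : Type*) := β

instance {β : Type*} : PartialOrder (Discrete β) where
  le a b := a = b
  le_refl _ := rfl
  le_trans _ _ _ h h' := Eq.trans h h'
  le_antisymm _ _ h _ := h

instance {β : Type*} [Fintype β] : Fintype (Discrete β) := inferInstanceAs (Fintype β)
instance {β : Type*} [DecidableEq β] : DecidableEq (Discrete β) := inferInstanceAs (DecidableEq β)

instance {β γ : Type*} [Fintype β] [Fintype γ] : Fintype (β ⊕ₗ γ) :=
  inferInstanceAs (Fintype (β ⊕ γ))

/-- A ladder with `k` levels, the `i`-th level an antichain of size `(q i) + 1 ∈ {1, 2}`. -/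
def Ladder (k : ℕ) (q : Fin k → Fin 2) := Σ i : Fin k, Fin ((q i : ℕ) + 1)

instance {k : ℕ} {q : Fin k → Fin 2} : Fintype (Ladder k q) :=
  inferInstanceAs (Fintype (Σ i : Fin k, Fin ((q i : ℕ) + 1)))

instance {k : ℕ} {q : Fin k → Fin 2} : DecidableEq (Ladder k q) :=
  inferInstanceAs (DecidableEq (Σ i : Fin k, Fin ((q i : ℕ) + 1)))

instance {k : ℕ} {q : Fin k → Fin 2} : PartialOrder (Ladder k q) where
  le a b := a.1 < b.1 ∨ a = b
  le_refl _ := Or.inr rfl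
  le_trans := by
    rintro a b c (h | rfl) (h' | rfl)
    · exact Or.inl (h.trans h')
    · exact Or.inl h
    · exact Or.inl h'
    · exact Or.inr rfl
  le_antisymm := by
    rintro a b (h | rfl) (h' | h2)
    · exact ((lt_asymm h) h').elim
    · exact h2.symm
    · rfl
    · rfl

/-- A rooted forest: every element is covered by at most one element
(has at most one successor). -/
def IsRootedForest (α : Type*) [PartialOrder α] : Prop :=
  ∀ a b c : α, a ⋖ b → a ⋖ c → b = c

/-- A finite poset is a ladder if it is order-isomorphic to some `Ladder k q`. -/
def IsLadder (α : Type*) [Fintype α] [PartialOrder α] : Prop :=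
  ∃ (k : ℕ) (q : Fin k → Fin 2), Nonempty (α ≃o Ladder k q)

variable (Q' Q'' P2 : Type) [Fintype Q'] [PartialOrder Q'] [Fintype Q'']
  [PartialOrder Q''] [Fintype P2] [PartialOrder P2]

/-- The common carrier of the posets `P = Q' ⊕ a ⊕ b ⊕ Q'' + P₂` and
`P' = Q' ⊕ {a, b} ⊕ Q'' + P₂`, with `a = false`, `b = true` in the middle. -/
def Gam := (Q' ⊕ (Bool ⊕ Q'')) ⊕ P2

instance : Fintype (Gam Q' Q'' P2) :=
  inferInstanceAs (Fintype ((Q' ⊕ (Bool ⊕ Q'')) ⊕ P2))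

/-- The order of `P = Q' ⊕ a ⊕ b ⊕ Q'' + P₂` (the middle `Bool` is ordered,
`a = false ≺ b = true`). -/
noncomputable def Pord : PartialOrder (Gam Q' Q'' P2) :=
  inferInstanceAs (PartialOrder ((Q' ⊕ₗ (Bool ⊕ₗ Q'')) ⊕ P2))

/-- The order of `P' = P \ {(a,b)}`: the middle `Bool` is an antichain. -/
noncomputable def P'ord : PartialOrder (Gam Q' Q'' P2) :=
  inferInstanceAs (PartialOrder ((Q' ⊕ₗ (Discrete Bool ⊕ₗ Q'')) ⊕ P2))

/-- The element `a`. -/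
def aE : Gam Q' Q'' P2 := Sum.inl (Sum.inr (Sum.inl false))

/-- The element `b`. -/
def bE : Gam Q' Q'' P2 := Sum.inl (Sum.inr (Sum.inl true))

/-- `π̂`: the listing obtained from `π` by interchanging `a` and `b`. -/
noncomputable def hatL (π : Listing (Gam Q' Q'' P2)) : Listing (Gam Q' Q'' P2) :=
  π.trans (Equiv.swap (aE Q' Q'' P2) (bE Q' Q'' P2))

/-- `≤` in `P`. -/
noncomputable def leP (u w : Gam Q' Q'' P2) : Prop :=
  @LE.le _ (Pord Q' Q'' P2).toPreorder.toLE u w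

/-- `<` in `P`. -/
noncomputable def ltP (u w : Gam Q' Q'' P2) : Prop :=
  @LT.lt _ (Pord Q' Q'' P2).toPreorder.toLT u w

/-- linear extension of `P`. -/
noncomputable def linP (π : Listing (Gam Q' Q'' P2)) : Prop :=
  @IsLinExt _ _ (Pord Q' Q'' P2) π

/-- linear extension of `P'`. -/
noncomputable def linP' (π : Listing (Gam Q' Q'' P2)) : Prop :=
  @IsLinExt _ _ (P'ord Q' Q'' P2) π

/-- promotion `∂_i` in `P`. -/
noncomputable def promP (i : ℕ) (π : Listing (Gam Q' Q'' P2)) : Listing (Gam Q' Q'' P2) :=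
  @promo _ _ (Pord Q' Q'' P2) i π

/-- promotion `∂_i` in `P'`. -/
noncomputable def promP' (i : ℕ) (π : Listing (Gam Q' Q'' P2)) : Listing (Gam Q' Q'' P2) :=
  @promo _ _ (P'ord Q' Q'' P2) i π

section Abstract
variable {β : Type*} [Fintype β]

def Cp (O : PartialOrder β) (u v : β) : Prop :=
  @LE.le β O.toPreorder.toLE u v ∨ @LE.le β O.toPreorder.toLE v u

lemma Cp_comm (O : PartialOrder β) {u v : β} : Cp O u v ↔ Cp O v u := or_comm

lemma promo_stop (O : PartialOrder β) {i : ℕ} (h : Fintype.card β ≤ i) (π : Listing β) :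
    @promo β _ O i π = π := by
  unfold promo
  rw [List.drop_eq_nil_of_le (by simpa using h)]
  rfl

lemma promo_step (O : PartialOrder β) {i : ℕ} (h : i < Fintype.card β) (π : Listing β) :
    @promo β _ O i π = @promo β _ O (i+1) (@tau β _ O i π) := by
  unfold promo
  rw [List.drop_eq_getElem_cons (by simpa using h), List.getElem_range, List.foldl_cons]

lemma tau_of_cmp (O : PartialOrder β) {i : ℕ} {π : Listing β}
    (h : ∀ h1 : i + 1 < Fintype.card β,
      Cp O (π ⟨i, Nat.lt_of_succ_lt h1⟩) (π ⟨i+1, h1⟩)) :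
    @tau β _ O i π = π := by
  unfold tau
  by_cases h1 : i + 1 < Fintype.card β
  · rw [dif_pos h1, if_neg]
    rcases h h1 with h2 | h2
    · exact fun hc => hc.1 h2
    · exact fun hc => hc.2 h2
  · rw [dif_neg h1]

lemma tau_of_not (O : PartialOrder β) {i : ℕ} {π : Listing β} (h1 : i + 1 < Fintype.card β)
    (h2 : ¬ Cp O (π ⟨i, Nat.lt_of_succ_lt h1⟩) (π ⟨i+1, h1⟩)) :
    @tau β _ O i π =
      (Equiv.swap (⟨i, Nat.lt_of_succ_lt h1⟩ : Fin (Fintype.card β)) ⟨i+1, h1⟩).trans π := by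
  unfold tau
  rw [dif_pos h1, if_pos ⟨fun h => h2 (Or.inl h), fun h => h2 (Or.inr h)⟩]

variable (O O' : PartialOrder β) (a b : β)

/-- swapped-listing entries stay fixed off the swap positions -/
lemma swap_trans_apply {i : ℕ} (h1 : i + 1 < Fintype.card β) (π : Listing β)
    (k : Fin (Fintype.card β)) :
    ((Equiv.swap (⟨i, Nat.lt_of_succ_lt h1⟩ : Fin (Fintype.card β)) ⟨i+1, h1⟩).trans π) k
      = π (Equiv.swap ⟨i, Nat.lt_of_succ_lt h1⟩ ⟨i+1, h1⟩ k) := rfl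

/-- Lemma A : if `a` does not occur at any position ≥ i, the two promotions agree. -/
lemma lemA
    (hagree : ∀ u v : β, ¬(u = a ∧ v = b) → ¬(u = b ∧ v = a) → (Cp O u v ↔ Cp O' u v)) :
    ∀ (fuel i : ℕ) (π : Listing β), Fintype.card β ≤ i + fuel →
    (∀ k : Fin (Fintype.card β), i ≤ (k : ℕ) → π k ≠ a) →
    @promo β _ O' i π = @promo β _ O i π := by
  intro fuel
  induction fuel with
  | zero =>
    intro i π hle _
    rw [promo_stop O (by omega), promo_stop O' (by omega)]
  | succ f ih =>
    intro i π hle hA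
    by_cases hi : i < Fintype.card β
    · rw [promo_step O hi, promo_step O' hi]
      by_cases h1 : i + 1 < Fintype.card β
      · have hu : π ⟨i, hi⟩ ≠ a := hA _ le_rfl
        have hv : π ⟨i+1, h1⟩ ≠ a := hA _ (by simp)
        have hcnd1 : ¬(π ⟨i, Nat.lt_of_succ_lt h1⟩ = a ∧ π ⟨i+1, h1⟩ = b) := fun h => hu h.1
        have hcnd2 : ¬(π ⟨i, Nat.lt_of_succ_lt h1⟩ = b ∧ π ⟨i+1, h1⟩ = a) := fun h => hv h.2
        by_cases hc : Cp O (π ⟨i, Nat.lt_of_succ_lt h1⟩) (π ⟨i+1, h1⟩)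
        · rw [tau_of_cmp O (fun _ => hc),
            tau_of_cmp O' (fun _ => (hagree _ _ hcnd1 hcnd2).mp hc)]
          exact ih (i+1) π (by omega) (fun k hk => hA k (by omega))
        · have hc' : ¬ Cp O' (π ⟨i, Nat.lt_of_succ_lt h1⟩) (π ⟨i+1, h1⟩) :=
            fun h => hc ((hagree _ _ hcnd1 hcnd2).mpr h)
          rw [tau_of_not O h1 hc, tau_of_not O' h1 hc']
          refine ih (i+1) _ (by omega) ?_
          intro k hk
          rw [swap_trans_apply]
          rcases eq_or_ne k ⟨i+1, h1⟩ with rfl | hne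
          · rw [Equiv.swap_apply_right]; exact hA _ le_rfl
          · rw [Equiv.swap_apply_of_ne_of_ne (Fin.ne_of_val_ne (show (k:ℕ) ≠ i by omega)) hne]
            exact hA k (by omega)
      · rw [tau_of_cmp O (fun hh => absurd hh h1), tau_of_cmp O' (fun hh => absurd hh h1)]
        exact ih (i+1) π (by omega) (fun k hk => hA k (by omega))
    · rw [promo_stop O (by omega), promo_stop O' (by omega)]

/-- Lemma B : if the entry at position i lies in a comparability-closed set M
avoiding a and b, the two promotions agree. -/
lemma lemB (M : Set β)
    (hagree : ∀ u v : β, ¬(u = a ∧ v = b) → ¬(u = b ∧ v = a) → (Cp O u v ↔ Cp O' u v))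
    (hMa : a ∉ M) (hMb : b ∉ M)
    (hMcl : ∀ m ∈ M, ∀ u, Cp O m u → u ∈ M) :
    ∀ (fuel i : ℕ) (π : Listing β), Fintype.card β ≤ i + fuel →
    (∀ hi : i < Fintype.card β, π ⟨i, hi⟩ ∈ M) →
    @promo β _ O' i π = @promo β _ O i π := by
  intro fuel
  induction fuel with
  | zero =>
    intro i π hle _
    rw [promo_stop O (by omega), promo_stop O' (by omega)]
  | succ f ih =>
    intro i π hle hM
    by_cases hi : i < Fintype.card β
    · rw [promo_step O hi, promo_step O' hi]
      by_cases h1 : i + 1 < Fintype.card β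
      · have hu : π ⟨i, hi⟩ ∈ M := hM hi
        have hu' : π ⟨i, Nat.lt_of_succ_lt h1⟩ ∈ M := hu
        have hua : π ⟨i, Nat.lt_of_succ_lt h1⟩ ≠ a := fun h => hMa (h ▸ hu')
        have hub : π ⟨i, Nat.lt_of_succ_lt h1⟩ ≠ b := fun h => hMb (h ▸ hu')
        have hcnd1 : ¬(π ⟨i, Nat.lt_of_succ_lt h1⟩ = a ∧ π ⟨i+1, h1⟩ = b) := fun h => hua h.1
        have hcnd2 : ¬(π ⟨i, Nat.lt_of_succ_lt h1⟩ = b ∧ π ⟨i+1, h1⟩ = a) := fun h => hub h.1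
        by_cases hc : Cp O (π ⟨i, Nat.lt_of_succ_lt h1⟩) (π ⟨i+1, h1⟩)
        · rw [tau_of_cmp O (fun _ => hc),
            tau_of_cmp O' (fun _ => (hagree _ _ hcnd1 hcnd2).mp hc)]
          refine ih (i+1) π (by omega) ?_
          intro hi1
          exact hMcl _ hu' _ hc
        · have hc' : ¬ Cp O' (π ⟨i, Nat.lt_of_succ_lt h1⟩) (π ⟨i+1, h1⟩) :=
            fun h => hc ((hagree _ _ hcnd1 hcnd2).mpr h)
          rw [tau_of_not O h1 hc, tau_of_not O' h1 hc']
          refine ih (i+1) _ (by omega) ?_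
          intro hi1
          rw [swap_trans_apply, Equiv.swap_apply_right]
          exact hu'
      · rw [tau_of_cmp O (fun hh => absurd hh h1), tau_of_cmp O' (fun hh => absurd hh h1)]
        exact ih (i+1) π (by omega) (fun hi1 => absurd hi1 (by omega))
    · rw [promo_stop O (by omega), promo_stop O' (by omega)]

/-- The swap `a↔b` commutes with promotion wrt O' when it preserves O'-comparability. -/
lemma lemAuto
    (hs : ∀ u v : β, Cp O' (Equiv.swap a b u) (Equiv.swap a b v) ↔ Cp O' u v) :
    ∀ (fuel i : ℕ) (π : Listing β), Fintype.card β ≤ i + fuel →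
    @promo β _ O' i (π.trans (Equiv.swap a b)) =
      (@promo β _ O' i π).trans (Equiv.swap a b) := by
  intro fuel
  induction fuel with
  | zero =>
    intro i π hle
    rw [promo_stop O' (by omega), promo_stop O' (by omega)]
  | succ f ih =>
    intro i π hle
    by_cases hi : i < Fintype.card β
    · rw [promo_step O' hi, promo_step O' hi]
      by_cases h1 : i + 1 < Fintype.card β
      · by_cases hc : Cp O' (π ⟨i, Nat.lt_of_succ_lt h1⟩) (π ⟨i+1, h1⟩)
        · rw [tau_of_cmp O' (fun _ => hc), tau_of_cmp O' (π := π.trans (Equiv.swap a b))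
            (fun _ => (hs _ _).mpr hc)]
          exact ih (i+1) π (by omega)
        · rw [tau_of_not O' h1 hc, tau_of_not O' (π := π.trans (Equiv.swap a b)) h1
            (fun h => hc ((hs _ _).mp h))]
          rw [← Equiv.trans_assoc]
          exact ih (i+1) _ (by omega)
      · rw [tau_of_cmp O' (π := π) (fun hh => absurd hh h1),
          tau_of_cmp O' (π := π.trans (Equiv.swap a b)) (fun hh => absurd hh h1)]
        exact ih (i+1) π (by omega)
    · rw [promo_stop O' (by omega), promo_stop O' (by omega)]

/-- Lemma C3: once `a` is strictly left of position i and we compare the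
`hat`-ed listing in O' against the original in O, they stay in sync. -/
lemma lemC3 (hab : a ≠ b)
    (hagree : ∀ u v : β, ¬(u = a ∧ v = b) → ¬(u = b ∧ v = a) → (Cp O u v ↔ Cp O' u v))
    (hba : ∀ v : β, v ≠ a → v ≠ b → (Cp O v b ↔ Cp O' v a)) :
    ∀ (fuel i : ℕ) (π : Listing β), Fintype.card β ≤ i + fuel →
    (∀ k : Fin (Fintype.card β), i ≤ (k : ℕ) → π k ≠ a) →
    @promo β _ O' i (π.trans (Equiv.swap a b)) =
      (@promo β _ O i π).trans (Equiv.swap a b) := by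
  intro fuel
  induction fuel with
  | zero =>
    intro i π hle _
    rw [promo_stop O (by omega), promo_stop O' (by omega)]
  | succ f ih =>
    intro i π hle hA
    by_cases hi : i < Fintype.card β
    · rw [promo_step O hi, promo_step O' hi]
      by_cases h1 : i + 1 < Fintype.card β
      · set u := π ⟨i, Nat.lt_of_succ_lt h1⟩ with hu_def
        set v := π ⟨i+1, h1⟩ with hv_def
        have hu : u ≠ a := hA _ le_rfl
        have hv : v ≠ a := hA _ (by simp)
        have huv : u ≠ v := fun h => by
          have := π.injective h
          simp [Fin.ext_iff] at this
        have key : Cp O' (Equiv.swap a b u) (Equiv.swap a b v) ↔ Cp O u v := by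
          by_cases hub : u = b
          · subst hub
            have hvb : v ≠ u := fun h => huv h.symm
            rw [Equiv.swap_apply_right, Equiv.swap_apply_of_ne_of_ne hv hvb]
            rw [Cp_comm O', ← hba v hv hvb, Cp_comm O]
          · by_cases hvb : v = b
            · subst hvb
              rw [Equiv.swap_apply_right, Equiv.swap_apply_of_ne_of_ne hu hub]
              exact (hba u hu hub).symm
            · rw [Equiv.swap_apply_of_ne_of_ne hu hub, Equiv.swap_apply_of_ne_of_ne hv hvb]
              exact ((hagree u v (fun h => hu h.1) (fun h => hub h.1))).symm
        have hents : (π.trans (Equiv.swap a b)) ⟨i, Nat.lt_of_succ_lt h1⟩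
            = Equiv.swap a b u := rfl
        have hents2 : (π.trans (Equiv.swap a b)) ⟨i+1, h1⟩ = Equiv.swap a b v := rfl
        by_cases hc : Cp O u v
        · rw [tau_of_cmp O (fun _ => hc), tau_of_cmp O' (π := π.trans (Equiv.swap a b))
            (fun _ => key.mpr hc)]
          exact ih (i+1) π (by omega) (fun k hk => hA k (by omega))
        · rw [tau_of_not O h1 hc, tau_of_not O' (π := π.trans (Equiv.swap a b)) h1
            (fun h => hc (key.mp h))]
          rw [← Equiv.trans_assoc]
          refine ih (i+1) _ (by omega) ?_
          intro k hk
          rw [swap_trans_apply]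
          rcases eq_or_ne k ⟨i+1, h1⟩ with rfl | hne
          · rw [Equiv.swap_apply_right]; exact hA _ le_rfl
          · rw [Equiv.swap_apply_of_ne_of_ne (Fin.ne_of_val_ne (show (k:ℕ) ≠ i by omega)) hne]
            exact hA k (by omega)
      · rw [tau_of_cmp O (fun hh => absurd hh h1),
          tau_of_cmp O' (π := π.trans (Equiv.swap a b)) (fun hh => absurd hh h1)]
        exact ih (i+1) π (by omega) (fun k hk => hA k (by omega))
    · rw [promo_stop O (by omega), promo_stop O' (by omega)]

/-- Lemma C2: `a` sits at position i, `b` at position q, only `M`-elements in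
between; then the `O'` promotion equals the `O` promotion followed by the swap. -/
lemma lemC2 (hab : a ≠ b)
    (hagree : ∀ u v : β, ¬(u = a ∧ v = b) → ¬(u = b ∧ v = a) → (Cp O u v ↔ Cp O' u v))
    (hba : ∀ v : β, v ≠ a → v ≠ b → (Cp O v b ↔ Cp O' v a))
    (hCab : Cp O a b) (hC'ab : ¬ Cp O' a b) (M : Set β)
    (hMab : ∀ m ∈ M, ¬ Cp O a m ∧ ¬ Cp O' a m) :
    ∀ (fuel i : ℕ) (π : Listing β) (q : Fin (Fintype.card β)), π q = b →
    (q : ℕ) ≤ i + fuel → i < (q : ℕ) →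
    ∀ hi : i < Fintype.card β, π ⟨i, hi⟩ = a →
    (∀ k : Fin (Fintype.card β), i < (k : ℕ) → (k : ℕ) < (q : ℕ) → π k ∈ M) →
    @promo β _ O' i π = (@promo β _ O i π).trans (Equiv.swap a b) := by
  intro fuel
  induction fuel with
  | zero => intro i π q hq hle hiq hi ha hbet; omega
  | succ f ih =>
    intro i π q hq hle hiq hi ha hbet
    have h1 : i + 1 < Fintype.card β := by have := q.isLt; omega
    rw [promo_step O hi, promo_step O' hi]
    by_cases hq1 : i + 1 < (q : ℕ)
    · -- entry at i+1 is an M element, both promotions swap it across a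
      have hv : π ⟨i+1, h1⟩ ∈ M := hbet _ (by simp) (by simpa using hq1)
      have hnc : ¬ Cp O (π ⟨i, Nat.lt_of_succ_lt h1⟩) (π ⟨i+1, h1⟩) := by
        rw [show π ⟨i, Nat.lt_of_succ_lt h1⟩ = a from ha]
        exact (hMab _ hv).1
      have hnc' : ¬ Cp O' (π ⟨i, Nat.lt_of_succ_lt h1⟩) (π ⟨i+1, h1⟩) := by
        rw [show π ⟨i, Nat.lt_of_succ_lt h1⟩ = a from ha]
        exact (hMab _ hv).2
      rw [tau_of_not O h1 hnc, tau_of_not O' h1 hnc']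
      set σ := (Equiv.swap (⟨i, Nat.lt_of_succ_lt h1⟩ : Fin (Fintype.card β))
        ⟨i+1, h1⟩).trans π with hσ
      refine ih (i+1) σ q ?_ (by omega) (by omega) h1 ?_ ?_
      · rw [hσ, swap_trans_apply, Equiv.swap_apply_of_ne_of_ne
          (Fin.ne_of_val_ne (show (q:ℕ) ≠ i by omega))
          (Fin.ne_of_val_ne (show (q:ℕ) ≠ i+1 by omega))]
        exact hq
      · rw [hσ, swap_trans_apply, Equiv.swap_apply_right]
        exact ha
      · intro k hk1 hk2
        rw [hσ, swap_trans_apply, Equiv.swap_apply_of_ne_of_ne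
          (Fin.ne_of_val_ne (show (k:ℕ) ≠ i by omega))
          (Fin.ne_of_val_ne (show (k:ℕ) ≠ i+1 by omega))]
        exact hbet k (by omega) hk2
    · -- q = i+1 : the entries at i, i+1 are a, b
      have hqv : (q : ℕ) = i + 1 := by omega
      have hqeq : q = ⟨i+1, h1⟩ := Fin.ext hqv
      have hvb : π ⟨i+1, h1⟩ = b := by rw [← hqeq]; exact hq
      have hcO : Cp O (π ⟨i, Nat.lt_of_succ_lt h1⟩) (π ⟨i+1, h1⟩) := by
        rw [show π ⟨i, Nat.lt_of_succ_lt h1⟩ = a from ha, hvb]; exact hCab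
      have hcO' : ¬ Cp O' (π ⟨i, Nat.lt_of_succ_lt h1⟩) (π ⟨i+1, h1⟩) := by
        rw [show π ⟨i, Nat.lt_of_succ_lt h1⟩ = a from ha, hvb]; exact hC'ab
      rw [tau_of_cmp O (fun _ => hcO), tau_of_not O' h1 hcO']
      have hswap : (Equiv.swap (⟨i, Nat.lt_of_succ_lt h1⟩ : Fin (Fintype.card β))
          ⟨i+1, h1⟩).trans π = π.trans (Equiv.swap a b) := by
        apply Equiv.ext
        intro k
        rw [swap_trans_apply, Equiv.trans_apply]
        rcases eq_or_ne k ⟨i, Nat.lt_of_succ_lt h1⟩ with rfl | hki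
        · rw [Equiv.swap_apply_left, hvb, show π ⟨i, Nat.lt_of_succ_lt h1⟩ = a from ha,
            Equiv.swap_apply_left]
        · rcases eq_or_ne k ⟨i+1, h1⟩ with rfl | hki1
          · rw [Equiv.swap_apply_right, show π ⟨i, Nat.lt_of_succ_lt h1⟩ = a from ha, hvb,
              Equiv.swap_apply_right]
          · rw [Equiv.swap_apply_of_ne_of_ne hki hki1,
              Equiv.swap_apply_of_ne_of_ne
                (fun h => hki (π.injective (h.trans ha.symm)))
                (fun h => hki1 (π.injective (h.trans hvb.symm)))]
      rw [hswap]
      exact lemC3 O O' a b hab hagree hba (Fintype.card β) (i+1) π (by omega)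
        (fun k hk h => by
          have : k = ⟨i, Nat.lt_of_succ_lt h1⟩ := π.injective (h.trans ha.symm)
          rw [this] at hk
          simp at hk)

/-- Lemma C1: position i holds an element of `L`, the positions up to `a` hold
`L ∪ M` elements, and between `a` and `b` only `M` elements. -/
lemma lemC1 (hab : a ≠ b)
    (hagree : ∀ u v : β, ¬(u = a ∧ v = b) → ¬(u = b ∧ v = a) → (Cp O u v ↔ Cp O' u v))
    (hba : ∀ v : β, v ≠ a → v ≠ b → (Cp O v b ↔ Cp O' v a))
    (hCab : Cp O a b) (hC'ab : ¬ Cp O' a b) (M L : Set β)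
    (hMab : ∀ m ∈ M, ¬ Cp O a m ∧ ¬ Cp O' a m)
    (hMcl : ∀ m ∈ M, ∀ u, Cp O m u → u ∈ M)
    (hLa : ∀ l ∈ L, Cp O l a ∧ Cp O' l a)
    (hLne : ∀ l ∈ L, l ≠ a ∧ l ≠ b)
    (hLM : ∀ l ∈ L, l ∉ M) :
    ∀ (fuel i : ℕ) (π : Listing β) (p q : Fin (Fintype.card β)), π p = a → π q = b →
    (p : ℕ) ≤ i + fuel → i < (p : ℕ) → (p : ℕ) < (q : ℕ) →
    ∀ hi : i < Fintype.card β, π ⟨i, hi⟩ ∈ L →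
    (∀ k : Fin (Fintype.card β), i < (k : ℕ) → (k : ℕ) < (p : ℕ) → π k ∈ L ∪ M) →
    (∀ k : Fin (Fintype.card β), (p : ℕ) < (k : ℕ) → (k : ℕ) < (q : ℕ) → π k ∈ M) →
    @promo β _ O' i π = (@promo β _ O i π).trans (Equiv.swap a b) := by
  intro fuel
  induction fuel with
  | zero => intro i π p q hp hq hle hip hpq hi hL hbet1 hbet2; omega
  | succ f ih =>
    intro i π p q hp hq hle hip hpq hi hL hbet1 hbet2
    have h1 : i + 1 < Fintype.card β := by have := p.isLt; omega
    rw [promo_step O hi, promo_step O' hi]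
    have hu : π ⟨i, Nat.lt_of_succ_lt h1⟩ ∈ L := hL
    have huab := hLne _ hu
    by_cases hp1 : i + 1 < (p : ℕ)
    · -- entry at i+1 is in L ∪ M
      have hv : π ⟨i+1, h1⟩ ∈ L ∪ M := hbet1 _ (by simp) (by simpa using hp1)
      have hcnd1 : ¬(π ⟨i, Nat.lt_of_succ_lt h1⟩ = a ∧ π ⟨i+1, h1⟩ = b) := fun h => huab.1 h.1
      have hcnd2 : ¬(π ⟨i, Nat.lt_of_succ_lt h1⟩ = b ∧ π ⟨i+1, h1⟩ = a) := fun h => huab.2 h.1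
      by_cases hc : Cp O (π ⟨i, Nat.lt_of_succ_lt h1⟩) (π ⟨i+1, h1⟩)
      · -- comparable: no swap; the new head must be in L
        have hvL : π ⟨i+1, h1⟩ ∈ L := by
          rcases hv with hv | hv
          · exact hv
          · exact absurd (hMcl _ hv _ ((Cp_comm O).mp hc)) (hLM _ hu)
        rw [tau_of_cmp O (fun _ => hc),
          tau_of_cmp O' (fun _ => (hagree _ _ hcnd1 hcnd2).mp hc)]
        exact ih (i+1) π p q hp hq (by omega) (by omega) hpq h1 hvL
          (fun k hk1 hk2 => hbet1 k (by omega) hk2)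
          hbet2
      · have hc' : ¬ Cp O' (π ⟨i, Nat.lt_of_succ_lt h1⟩) (π ⟨i+1, h1⟩) :=
          fun h => hc ((hagree _ _ hcnd1 hcnd2).mpr h)
        rw [tau_of_not O h1 hc, tau_of_not O' h1 hc']
        set σ := (Equiv.swap (⟨i, Nat.lt_of_succ_lt h1⟩ : Fin (Fintype.card β))
          ⟨i+1, h1⟩).trans π with hσ
        refine ih (i+1) σ p q ?_ ?_ (by omega) (by omega) hpq h1 ?_ ?_ ?_
        · rw [hσ, swap_trans_apply, Equiv.swap_apply_of_ne_of_ne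
            (Fin.ne_of_val_ne (show (p:ℕ) ≠ i by omega))
            (Fin.ne_of_val_ne (show (p:ℕ) ≠ i+1 by omega))]
          exact hp
        · rw [hσ, swap_trans_apply, Equiv.swap_apply_of_ne_of_ne
            (Fin.ne_of_val_ne (show (q:ℕ) ≠ i by omega))
            (Fin.ne_of_val_ne (show (q:ℕ) ≠ i+1 by omega))]
          exact hq
        · rw [hσ, swap_trans_apply, Equiv.swap_apply_right]
          exact hu
        · intro k hk1 hk2
          rw [hσ, swap_trans_apply, Equiv.swap_apply_of_ne_of_ne
            (Fin.ne_of_val_ne (show (k:ℕ) ≠ i by omega))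
            (Fin.ne_of_val_ne (show (k:ℕ) ≠ i+1 by omega))]
          exact hbet1 k (by omega) hk2
        · intro k hk1 hk2
          rw [hσ, swap_trans_apply, Equiv.swap_apply_of_ne_of_ne
            (Fin.ne_of_val_ne (show (k:ℕ) ≠ i by omega))
            (Fin.ne_of_val_ne (show (k:ℕ) ≠ i+1 by omega))]
          exact hbet2 k hk1 hk2
    · -- p = i+1 : the next entry is a; no swap, then use C2
      have hpv : (p : ℕ) = i + 1 := by omega
      have hpeq : p = ⟨i+1, h1⟩ := Fin.ext hpv
      have hva : π ⟨i+1, h1⟩ = a := by rw [← hpeq]; exact hp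
      have hcO : Cp O (π ⟨i, Nat.lt_of_succ_lt h1⟩) (π ⟨i+1, h1⟩) := by
        rw [hva]; exact (hLa _ hu).1
      have hcO' : Cp O' (π ⟨i, Nat.lt_of_succ_lt h1⟩) (π ⟨i+1, h1⟩) := by
        rw [hva]; exact (hLa _ hu).2
      rw [tau_of_cmp O (fun _ => hcO), tau_of_cmp O' (fun _ => hcO')]
      exact lemC2 O O' a b hab hagree hba hCab hC'ab M hMab (Fintype.card β) (i+1) π q hq
        (by omega) (by omega) h1 hva
        (fun k hk1 hk2 => hbet2 k (by omega) hk2)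

end Abstract


section Concrete
variable (Q' Q'' P2 : Type) [Fintype Q'] [PartialOrder Q'] [Fintype Q'']
  [PartialOrder Q''] [Fintype P2] [PartialOrder P2]

/-- `≤` in `P'`. -/
noncomputable def leP' (u w : Gam Q' Q'' P2) : Prop :=
  @LE.le _ (P'ord Q' Q'' P2).toPreorder.toLE u w

lemma leP_iff (u w : Gam Q' Q'' P2) : leP Q' Q'' P2 u w ↔
    Sum.LiftRel (Sum.Lex (· ≤ ·) (Sum.Lex (· ≤ ·) (· ≤ ·))) (· ≤ ·) u w := ⟨id, id⟩

lemma leP'_iff (u w : Gam Q' Q'' P2) : leP' Q' Q'' P2 u w ↔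
    Sum.LiftRel (Sum.Lex (· ≤ ·) (Sum.Lex (· = ·) (· ≤ ·))) (· ≤ ·) u w := ⟨id, id⟩

lemma cpP_iff (u v : Gam Q' Q'' P2) : Cp (Pord Q' Q'' P2) u v ↔
    (leP Q' Q'' P2 u v ∨ leP Q' Q'' P2 v u) := Iff.rfl

lemma cpP'_iff (u v : Gam Q' Q'' P2) : Cp (P'ord Q' Q'' P2) u v ↔
    (leP' Q' Q'' P2 u v ∨ leP' Q' Q'' P2 v u) := Iff.rfl

lemma leP_iff₂ (u w : (Q' ⊕ (Bool ⊕ Q'')) ⊕ P2) : leP Q' Q'' P2 u w ↔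
    Sum.LiftRel (Sum.Lex (· ≤ ·) (Sum.Lex (· ≤ ·) (· ≤ ·))) (· ≤ ·) u w := ⟨id, id⟩

lemma leP'_iff₂ (u w : (Q' ⊕ (Bool ⊕ Q'')) ⊕ P2) : leP' Q' Q'' P2 u w ↔
    Sum.LiftRel (Sum.Lex (· ≤ ·) (Sum.Lex (· = ·) (· ≤ ·))) (· ≤ ·) u w := ⟨id, id⟩

/- injectivity lemmas stated at the (defeq) `Gam` type, so that `simp` can
discriminate equalities of `Gam` elements. -/
lemma geq_ll (w w' : Q' ⊕ (Bool ⊕ Q'')) :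
    @Eq (Gam Q' Q'' P2) (Sum.inl w) (Sum.inl w') ↔ w = w' :=
  ⟨fun h => Sum.inl.inj h, fun h => congrArg _ h⟩

lemma geq_rr (w w' : P2) :
    @Eq (Gam Q' Q'' P2) (Sum.inr w) (Sum.inr w') ↔ w = w' :=
  ⟨fun h => Sum.inr.inj h, fun h => congrArg _ h⟩

lemma geq_lr (w : Q' ⊕ (Bool ⊕ Q'')) (w' : P2) :
    @Eq (Gam Q' Q'' P2) (Sum.inl w) (Sum.inr w') ↔ False :=
  ⟨fun h => (by cases h), False.elim⟩

lemma geq_rl (w : P2) (w' : Q' ⊕ (Bool ⊕ Q'')) :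
    @Eq (Gam Q' Q'' P2) (Sum.inr w) (Sum.inl w') ↔ False :=
  ⟨fun h => (by cases h), False.elim⟩

lemma hab_c : aE Q' Q'' P2 ≠ bE Q' Q'' P2 := by
  intro h; cases h

lemma hCab_c : Cp (Pord Q' Q'' P2) (aE Q' Q'' P2) (bE Q' Q'' P2) := by
  rw [cpP_iff]
  left
  rw [leP_iff]
  exact Sum.LiftRel.inl (Sum.Lex.inr (Sum.Lex.inl (by decide)))

lemma hC'ab_c : ¬ Cp (P'ord Q' Q'' P2) (aE Q' Q'' P2) (bE Q' Q'' P2) := by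
  rw [cpP'_iff]
  simp [leP'_iff, leP'_iff₂, aE, bE]

lemma aE_eq : (Sum.inl (Sum.inr (Sum.inl false)) : Gam Q' Q'' P2) = aE Q' Q'' P2 := rfl
lemma bE_eq : (Sum.inl (Sum.inr (Sum.inl true)) : Gam Q' Q'' P2) = bE Q' Q'' P2 := rfl

lemma hagree_c : ∀ u v : Gam Q' Q'' P2,
    ¬(u = aE Q' Q'' P2 ∧ v = bE Q' Q'' P2) → ¬(u = bE Q' Q'' P2 ∧ v = aE Q' Q'' P2) →
    (Cp (Pord Q' Q'' P2) u v ↔ Cp (P'ord Q' Q'' P2) u v) := by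
  intro u v h1 h2
  rw [cpP_iff, cpP'_iff]
  rcases u with ((x|(c|y))|z) <;> rcases v with ((x'|(c'|y'))|z') <;>
    try simp [leP_iff, leP_iff₂, leP'_iff, leP'_iff₂]
  all_goals (rcases c <;> rcases c' <;> simp [leP_iff, leP_iff₂, leP'_iff, leP'_iff₂])
  · exact h1 ⟨aE_eq Q' Q'' P2, bE_eq Q' Q'' P2⟩
  · exact h2 ⟨bE_eq Q' Q'' P2, aE_eq Q' Q'' P2⟩

lemma hba_c : ∀ v : Gam Q' Q'' P2, v ≠ aE Q' Q'' P2 → v ≠ bE Q' Q'' P2 →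
    (Cp (Pord Q' Q'' P2) v (bE Q' Q'' P2) ↔ Cp (P'ord Q' Q'' P2) v (aE Q' Q'' P2)) := by
  intro v h1 h2
  rw [cpP_iff, cpP'_iff]
  rcases v with ((x|(c|y))|z) <;>
    first
      | (rcases c
         · exact absurd rfl h1
         · exact absurd rfl h2)
      | simp [leP_iff, leP_iff₂, leP'_iff, leP'_iff₂, aE, bE]

lemma hsle_c : ∀ u v : Gam Q' Q'' P2,
    leP' Q' Q'' P2 (Equiv.swap (aE Q' Q'' P2) (bE Q' Q'' P2) u)
      (Equiv.swap (aE Q' Q'' P2) (bE Q' Q'' P2) v) ↔ leP' Q' Q'' P2 u v := by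
  have key : ∀ w : Gam Q' Q'' P2, Equiv.swap (aE Q' Q'' P2) (bE Q' Q'' P2) w =
      (match w with
        | Sum.inl (Sum.inr (Sum.inl c)) => Sum.inl (Sum.inr (Sum.inl (!c)))
        | w => w) := by
    intro w
    rcases w with ((x|(c|y))|z)
    · exact Equiv.swap_apply_of_ne_of_ne (by intro h; cases h) (by intro h; cases h)
    · rcases c
      · exact Equiv.swap_apply_left _ _
      · exact Equiv.swap_apply_right _ _
    · exact Equiv.swap_apply_of_ne_of_ne (by intro h; cases h) (by intro h; cases h)
    · exact Equiv.swap_apply_of_ne_of_ne (by intro h; cases h) (by intro h; cases h)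
  intro u v
  rw [key, key]
  rcases u with ((x|(c|y))|z) <;> rcases v with ((x'|(c'|y'))|z') <;>
    first
      | (rcases c <;> rcases c' <;> simp [leP'_iff, leP'_iff₂])
      | (rcases c <;> simp [leP'_iff, leP'_iff₂])
      | (rcases c' <;> simp [leP'_iff, leP'_iff₂])
      | simp [leP'_iff, leP'_iff₂]

lemma hs_c : ∀ u v : Gam Q' Q'' P2,
    Cp (P'ord Q' Q'' P2) (Equiv.swap (aE Q' Q'' P2) (bE Q' Q'' P2) u)
      (Equiv.swap (aE Q' Q'' P2) (bE Q' Q'' P2) v) ↔ Cp (P'ord Q' Q'' P2) u v := by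
  intro u v
  rw [cpP'_iff, cpP'_iff, hsle_c, hsle_c]

/-- The `P2`-part of the carrier. -/
def Mc : Set (Gam Q' Q'' P2) := {u | ∃ z, u = Sum.inr z}

/-- The `Q'`-part of the carrier. -/
def Lc : Set (Gam Q' Q'' P2) := {u | ∃ x, u = Sum.inl (Sum.inl x)}

lemma hMa_c : aE Q' Q'' P2 ∉ Mc Q' Q'' P2 := by
  rintro ⟨z, h⟩
  exact (by cases h)

lemma hMb_c : bE Q' Q'' P2 ∉ Mc Q' Q'' P2 := by
  rintro ⟨z, h⟩
  exact (by cases h)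

lemma hMcl_c : ∀ m ∈ Mc Q' Q'' P2, ∀ u, Cp (Pord Q' Q'' P2) m u → u ∈ Mc Q' Q'' P2 := by
  rintro m ⟨z, rfl⟩ u hc
  rcases u with (w|z')
  · rw [cpP_iff Q' Q'' P2 (Sum.inr z) (Sum.inl w)] at hc
    simp [leP_iff, leP_iff₂] at hc
  · exact ⟨z', rfl⟩

lemma hMab_c : ∀ m ∈ Mc Q' Q'' P2,
    ¬ Cp (Pord Q' Q'' P2) (aE Q' Q'' P2) m ∧ ¬ Cp (P'ord Q' Q'' P2) (aE Q' Q'' P2) m := by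
  rintro m ⟨z, rfl⟩
  constructor
  · rw [cpP_iff Q' Q'' P2 (aE Q' Q'' P2) (Sum.inr z)]; simp [leP_iff, leP_iff₂, aE]
  · rw [cpP'_iff Q' Q'' P2 (aE Q' Q'' P2) (Sum.inr z)]; simp [leP'_iff, leP'_iff₂, aE]

lemma hLa_c : ∀ l ∈ Lc Q' Q'' P2,
    Cp (Pord Q' Q'' P2) l (aE Q' Q'' P2) ∧ Cp (P'ord Q' Q'' P2) l (aE Q' Q'' P2) := by
  rintro l ⟨x, rfl⟩
  constructor
  · rw [cpP_iff Q' Q'' P2 (Sum.inl (Sum.inl x)) (aE Q' Q'' P2)]; left; rw [leP_iff Q' Q'' P2 (Sum.inl (Sum.inl x)) (aE Q' Q'' P2)]; exact Sum.LiftRel.inl (Sum.Lex.sep _ _)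
  · rw [cpP'_iff Q' Q'' P2 (Sum.inl (Sum.inl x)) (aE Q' Q'' P2)]; left; rw [leP'_iff Q' Q'' P2 (Sum.inl (Sum.inl x)) (aE Q' Q'' P2)]; exact Sum.LiftRel.inl (Sum.Lex.sep _ _)

lemma hLne_c : ∀ l ∈ Lc Q' Q'' P2, l ≠ aE Q' Q'' P2 ∧ l ≠ bE Q' Q'' P2 := by
  rintro l ⟨x, rfl⟩
  constructor <;> intro h <;> cases h

lemma hLM_c : ∀ l ∈ Lc Q' Q'' P2, l ∉ Mc Q' Q'' P2 := by
  rintro l ⟨x, rfl⟩ ⟨z, h⟩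
  exact (by cases h)

end Concrete


section Concrete2
variable (Q' Q'' P2 : Type) [Fintype Q'] [PartialOrder Q'] [Fintype Q'']
  [PartialOrder Q''] [Fintype P2] [PartialOrder P2]

lemma ltP_iff (u w : Gam Q' Q'' P2) :
    ltP Q' Q'' P2 u w ↔ leP Q' Q'' P2 u w ∧ u ≠ w :=
  @lt_iff_le_and_ne _ (Pord Q' Q'' P2) u w

lemma ltP'_iff (u w : Gam Q' Q'' P2) :
    @LT.lt _ (P'ord Q' Q'' P2).toPreorder.toLT u w ↔ leP' Q' Q'' P2 u w ∧ u ≠ w :=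
  @lt_iff_le_and_ne _ (P'ord Q' Q'' P2) u w

lemma leP_refl (u : Gam Q' Q'' P2) : leP Q' Q'' P2 u u :=
  @le_refl _ (Pord Q' Q'' P2).toPreorder u

lemma le_ab : leP Q' Q'' P2 (aE Q' Q'' P2) (bE Q' Q'' P2) := by
  rw [leP_iff]
  exact Sum.LiftRel.inl (Sum.Lex.inr (Sum.Lex.inl (by decide)))

lemma ltP_ab : ltP Q' Q'' P2 (aE Q' Q'' P2) (bE Q' Q'' P2) :=
  (ltP_iff Q' Q'' P2 _ _).mpr ⟨le_ab Q' Q'' P2, hab_c Q' Q'' P2⟩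

lemma leQ'a (x : Q') : leP Q' Q'' P2 (Sum.inl (Sum.inl x)) (aE Q' Q'' P2) := by
  rw [leP_iff Q' Q'' P2 (Sum.inl (Sum.inl x)) (aE Q' Q'' P2)]
  exact Sum.LiftRel.inl (Sum.Lex.sep _ _)

lemma lt_Q'a (x : Q') : ltP Q' Q'' P2 (Sum.inl (Sum.inl x)) (aE Q' Q'' P2) :=
  (ltP_iff Q' Q'' P2 _ _).mpr ⟨leQ'a Q' Q'' P2 x, by intro h; cases h⟩

lemma lt_aQ'' (y : Q'') :
    ltP Q' Q'' P2 (aE Q' Q'' P2) (Sum.inl (Sum.inr (Sum.inr y))) :=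
  (ltP_iff Q' Q'' P2 _ _).mpr
    ⟨by rw [leP_iff Q' Q'' P2 (aE Q' Q'' P2) (Sum.inl (Sum.inr (Sum.inr y)))]; exact Sum.LiftRel.inl (Sum.Lex.inr (Sum.Lex.sep _ _)),
     by intro h; cases h⟩

lemma lt_bQ'' (y : Q'') :
    ltP Q' Q'' P2 (bE Q' Q'' P2) (Sum.inl (Sum.inr (Sum.inr y))) :=
  (ltP_iff Q' Q'' P2 _ _).mpr
    ⟨by rw [leP_iff Q' Q'' P2 (bE Q' Q'' P2) (Sum.inl (Sum.inr (Sum.inr y)))]; exact Sum.LiftRel.inl (Sum.Lex.inr (Sum.Lex.sep _ _)),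
     by intro h; cases h⟩

lemma not_le_b_a : ¬ leP Q' Q'' P2 (bE Q' Q'' P2) (aE Q' Q'' P2) := by
  simp [leP_iff, leP_iff₂, aE, bE]

lemma not_le_Q''a (y : Q'') :
    ¬ leP Q' Q'' P2 (Sum.inl (Sum.inr (Sum.inr y))) (aE Q' Q'' P2) := by
  simp [leP_iff, leP_iff₂, aE]

lemma not_le_P2a (z : P2) : ¬ leP Q' Q'' P2 (Sum.inr z) (aE Q' Q'' P2) := by
  simp [leP_iff, leP_iff₂, aE]

lemma lt_a_class (u : Gam Q' Q'' P2) (h : ltP Q' Q'' P2 u (aE Q' Q'' P2)) :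
    u ∈ Lc Q' Q'' P2 := by
  rw [ltP_iff] at h
  rcases u with ((x|(c|y))|z)
  · exact ⟨x, rfl⟩
  · rcases c
    · exact absurd (aE_eq Q' Q'' P2) h.2
    · exact absurd h.1 (not_le_b_a Q' Q'' P2)
  · exact absurd h.1 (not_le_Q''a Q' Q'' P2 y)
  · exact absurd h.1 (not_le_P2a Q' Q'' P2 z)

lemma le'P_le (u w : Gam Q' Q'' P2) (h : leP' Q' Q'' P2 u w) : leP Q' Q'' P2 u w := by
  rw [leP'_iff] at h
  rw [leP_iff]
  rcases u with ((x|(c|y))|z) <;> rcases w with ((x'|(c'|y'))|z') <;>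
    first
      | (rcases c <;> rcases c' <;> simp_all [Bool.le_iff_imp])
      | (rcases c <;> simp_all [Bool.le_iff_imp])
      | (rcases c' <;> simp_all [Bool.le_iff_imp])
      | simp_all [Bool.le_iff_imp]

lemma leP_cases (u w : Gam Q' Q'' P2) (h : leP Q' Q'' P2 u w) :
    leP' Q' Q'' P2 u w ∨ (u = aE Q' Q'' P2 ∧ w = bE Q' Q'' P2) := by
  rw [leP_iff] at h
  rw [leP'_iff]
  rcases u with ((x|(c|y))|z) <;> rcases w with ((x'|(c'|y'))|z') <;>
    try (left; simp_all [Bool.le_iff_imp]; done)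
  rcases c <;> rcases c' <;>
    first
      | (left; simp_all [Bool.le_iff_imp]; done)
      | (exact Or.inr ⟨aE_eq Q' Q'' P2, bE_eq Q' Q'' P2⟩)
      | (simp_all [Bool.le_iff_imp]; done)

lemma ltP_cases (u w : Gam Q' Q'' P2) (h : ltP Q' Q'' P2 u w) :
    @LT.lt _ (P'ord Q' Q'' P2).toPreorder.toLT u w ∨
      (u = aE Q' Q'' P2 ∧ w = bE Q' Q'' P2) := by
  rw [ltP_iff] at h
  rcases leP_cases Q' Q'' P2 u w h.1 with h' | h'
  · exact Or.inl ((ltP'_iff Q' Q'' P2 u w).mpr ⟨h', h.2⟩)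
  · exact Or.inr h'

lemma lt'P_lt (u w : Gam Q' Q'' P2)
    (h : @LT.lt _ (P'ord Q' Q'' P2).toPreorder.toLT u w) : ltP Q' Q'' P2 u w := by
  rw [ltP'_iff] at h
  exact (ltP_iff Q' Q'' P2 u w).mpr ⟨le'P_le Q' Q'' P2 u w h.1, h.2⟩

lemma hslt_c (u v : Gam Q' Q'' P2) :
    @LT.lt _ (P'ord Q' Q'' P2).toPreorder.toLT
      (Equiv.swap (aE Q' Q'' P2) (bE Q' Q'' P2) u)
      (Equiv.swap (aE Q' Q'' P2) (bE Q' Q'' P2) v) ↔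
    @LT.lt _ (P'ord Q' Q'' P2).toPreorder.toLT u v := by
  rw [ltP'_iff, ltP'_iff, hsle_c,
    (Equiv.injective (Equiv.swap (aE Q' Q'' P2) (bE Q' Q'' P2))).ne_iff]

/- `hatL` basics -/
lemma hat_hat (π : Listing (Gam Q' Q'' P2)) : hatL Q' Q'' P2 (hatL Q' Q'' P2 π) = π := by
  unfold hatL
  rw [Equiv.trans_assoc, Equiv.swap_swap, Equiv.trans_refl]

lemma hat_symm_apply (π : Listing (Gam Q' Q'' P2)) (κ : Gam Q' Q'' P2) :
    (hatL Q' Q'' P2 π).symm κ = π.symm (Equiv.swap (aE Q' Q'' P2) (bE Q' Q'' P2) κ) := by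
  unfold hatL
  rw [Equiv.symm_trans_apply, Equiv.symm_swap]

/- linear extension facts -/
lemma lin_pos {π : Listing (Gam Q' Q'' P2)} (hπ : linP Q' Q'' P2 π)
    {u w : Gam Q' Q'' P2} (h : ltP Q' Q'' P2 u w) :
    ((π.symm u : Fin _) : ℕ) < ((π.symm w : Fin _) : ℕ) := by
  have := hπ (π.symm u) (π.symm w) (by
    rw [Equiv.apply_symm_apply, Equiv.apply_symm_apply]
    exact h)
  exact this

lemma posa_lt_posb {π : Listing (Gam Q' Q'' P2)} (hπ : linP Q' Q'' P2 π) :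
    ((π.symm (aE Q' Q'' P2) : Fin _) : ℕ) < ((π.symm (bE Q' Q'' P2) : Fin _) : ℕ) :=
  lin_pos Q' Q'' P2 hπ (ltP_ab Q' Q'' P2)

lemma betM {π : Listing (Gam Q' Q'' P2)} (hπ : linP Q' Q'' P2 π)
    (k : Fin (Fintype.card (Gam Q' Q'' P2)))
    (h1 : ((π.symm (aE Q' Q'' P2) : Fin _) : ℕ) < (k : ℕ))
    (h2 : (k : ℕ) < ((π.symm (bE Q' Q'' P2) : Fin _) : ℕ)) :
    π k ∈ Mc Q' Q'' P2 := by
  rcases h : π k with ((x|(c|y))|z)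
  · have hlt := lin_pos Q' Q'' P2 hπ (lt_Q'a Q' Q'' P2 x)
    rw [← h, Equiv.symm_apply_apply] at hlt
    omega
  · rcases c
    · have hk : k = π.symm (aE Q' Q'' P2) := by
        rw [← Equiv.symm_apply_apply π k, h]
        rfl
      rw [hk] at h1
      omega
    · have hk : k = π.symm (bE Q' Q'' P2) := by
        rw [← Equiv.symm_apply_apply π k, h]
        rfl
      rw [hk] at h2
      omega
  · have hlt := lin_pos Q' Q'' P2 hπ (lt_bQ'' Q' Q'' P2 y)
    rw [← h, Equiv.symm_apply_apply] at hlt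
    omega
  · exact ⟨z, rfl⟩

lemma betLM {π : Listing (Gam Q' Q'' P2)} (hπ : linP Q' Q'' P2 π)
    (k : Fin (Fintype.card (Gam Q' Q'' P2)))
    (h1 : (k : ℕ) < ((π.symm (aE Q' Q'' P2) : Fin _) : ℕ)) :
    π k ∈ Lc Q' Q'' P2 ∪ Mc Q' Q'' P2 := by
  rcases h : π k with ((x|(c|y))|z)
  · exact Or.inl ⟨x, rfl⟩
  · rcases c
    · have hk : k = π.symm (aE Q' Q'' P2) := by
        rw [← Equiv.symm_apply_apply π k, h]
        rfl
      rw [hk] at h1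
      omega
    · have hlt := lin_pos Q' Q'' P2 hπ (ltP_ab Q' Q'' P2)
      have hk : k = π.symm (bE Q' Q'' P2) := by
        rw [← Equiv.symm_apply_apply π k, h]
        rfl
      rw [hk] at h1
      omega
  · have hlt := lin_pos Q' Q'' P2 hπ (lt_aQ'' Q' Q'' P2 y)
    have hk : k = π.symm (Sum.inl (Sum.inr (Sum.inr y))) := by
      rw [← Equiv.symm_apply_apply π k, h]
    rw [hk] at h1
    omega
  · exact Or.inr ⟨z, rfl⟩

/- transfer of linearity -/
lemma lin'_of_lin {π : Listing (Gam Q' Q'' P2)} (hπ : linP Q' Q'' P2 π) :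
    linP' Q' Q'' P2 π := by
  intro i j h
  exact hπ i j (lt'P_lt Q' Q'' P2 _ _ h)

lemma lin'_hat {π : Listing (Gam Q' Q'' P2)} (hπ : linP' Q' Q'' P2 π) :
    linP' Q' Q'' P2 (hatL Q' Q'' P2 π) := by
  intro i j h
  exact hπ i j ((hslt_c Q' Q'' P2 (π i) (π j)).mp h)

lemma lin_of_lin' {σ : Listing (Gam Q' Q'' P2)} (hσ : linP' Q' Q'' P2 σ)
    (hlt : ((σ.symm (aE Q' Q'' P2) : Fin _) : ℕ) < ((σ.symm (bE Q' Q'' P2) : Fin _) : ℕ)) :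
    linP Q' Q'' P2 σ := by
  intro i j h
  rcases ltP_cases Q' Q'' P2 _ _ h with h' | ⟨ha, hb⟩
  · exact hσ i j h'
  · have hi : i = σ.symm (aE Q' Q'' P2) := by rw [← ha, Equiv.symm_apply_apply]
    have hj : j = σ.symm (bE Q' Q'' P2) := by rw [← hb, Equiv.symm_apply_apply]
    rw [Fin.lt_def, hi, hj]
    exact hlt

lemma lin_hat_of_lin' {σ : Listing (Gam Q' Q'' P2)} (hσ : linP' Q' Q'' P2 σ)
    (hlt : ((σ.symm (bE Q' Q'' P2) : Fin _) : ℕ) < ((σ.symm (aE Q' Q'' P2) : Fin _) : ℕ)) :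
    linP Q' Q'' P2 (hatL Q' Q'' P2 σ) := by
  intro i j h
  rcases ltP_cases Q' Q'' P2 _ _ h with h' | ⟨ha, hb⟩
  · exact hσ i j ((hslt_c Q' Q'' P2 (σ i) (σ j)).mp h')
  · have hi : i = (hatL Q' Q'' P2 σ).symm (aE Q' Q'' P2) := by
      rw [← ha, Equiv.symm_apply_apply]
    have hj : j = (hatL Q' Q'' P2 σ).symm (bE Q' Q'' P2) := by
      rw [← hb, Equiv.symm_apply_apply]
    rw [hat_symm_apply, Equiv.swap_apply_left] at hi
    rw [hat_symm_apply, Equiv.swap_apply_right] at hj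
    rw [Fin.lt_def, hi, hj]
    exact hlt

end Concrete2


section Wrappers
variable (Q' Q'' P2 : Type) [Fintype Q'] [PartialOrder Q'] [Fintype Q'']
  [PartialOrder Q''] [Fintype P2] [PartialOrder P2]

lemma auto_hat (i : ℕ) (π : Listing (Gam Q' Q'' P2)) :
    promP' Q' Q'' P2 i (hatL Q' Q'' P2 π) = hatL Q' Q'' P2 (promP' Q' Q'' P2 i π) :=
  lemAuto (P'ord Q' Q'' P2) (aE Q' Q'' P2) (bE Q' Q'' P2) (hs_c Q' Q'' P2)
    (Fintype.card (Gam Q' Q'' P2)) i π (Nat.le_add_left _ _)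

lemma case1 {π : Listing (Gam Q' Q'' P2)} (hπ : linP Q' Q'' P2 π)
    {κ : Gam Q' Q'' P2} (hκ : ltP Q' Q'' P2 κ (aE Q' Q'' P2)) :
    promP' Q' Q'' P2 (π.symm κ) π = hatL Q' Q'' P2 (promP Q' Q'' P2 (π.symm κ) π) := by
  have hi : ((π.symm κ : Fin _) : ℕ) < Fintype.card (Gam Q' Q'' P2) := (π.symm κ).isLt
  refine lemC1 (Pord Q' Q'' P2) (P'ord Q' Q'' P2) (aE Q' Q'' P2) (bE Q' Q'' P2)
    (hab_c Q' Q'' P2) (hagree_c Q' Q'' P2) (hba_c Q' Q'' P2) (hCab_c Q' Q'' P2)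
    (hC'ab_c Q' Q'' P2) (Mc Q' Q'' P2) (Lc Q' Q'' P2) (hMab_c Q' Q'' P2)
    (hMcl_c Q' Q'' P2) (hLa_c Q' Q'' P2) (hLne_c Q' Q'' P2) (hLM_c Q' Q'' P2)
    (Fintype.card (Gam Q' Q'' P2)) (↑(π.symm κ)) π
    (π.symm (aE Q' Q'' P2)) (π.symm (bE Q' Q'' P2))
    (π.apply_symm_apply _) (π.apply_symm_apply _)
    ((Nat.le_of_lt (π.symm (aE Q' Q'' P2)).isLt).trans (Nat.le_add_left _ _))
    (lin_pos Q' Q'' P2 hπ hκ) (posa_lt_posb Q' Q'' P2 hπ) hi ?_ ?_ ?_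
  · have h : π (π.symm κ) ∈ Lc Q' Q'' P2 := by
      rw [π.apply_symm_apply]
      exact lt_a_class Q' Q'' P2 κ hκ
    exact h
  · intro k _ hk2
    exact betLM Q' Q'' P2 hπ k hk2
  · intro k hk1 hk2
    exact betM Q' Q'' P2 hπ k hk1 hk2

lemma case2 {π : Listing (Gam Q' Q'' P2)} (hπ : linP Q' Q'' P2 π)
    {κ : Gam Q' Q'' P2} (h1 : ¬ leP Q' Q'' P2 κ (aE Q' Q'' P2))
    (h2 : ¬ leP Q' Q'' P2 κ (bE Q' Q'' P2)) :
    promP' Q' Q'' P2 (π.symm κ) π = promP Q' Q'' P2 (π.symm κ) π := by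
  rcases κ with ((x|(c|y))|z)
  · exact absurd (leQ'a Q' Q'' P2 x) h1
  · rcases c
    · exact absurd (leP_refl Q' Q'' P2 (aE Q' Q'' P2)) h1
    · exact absurd (leP_refl Q' Q'' P2 (bE Q' Q'' P2)) h2
  · refine lemA (Pord Q' Q'' P2) (P'ord Q' Q'' P2) (aE Q' Q'' P2) (bE Q' Q'' P2)
      (hagree_c Q' Q'' P2) (Fintype.card (Gam Q' Q'' P2))
      (↑(π.symm (Sum.inl (Sum.inr (Sum.inr y))))) π (Nat.le_add_left _ _) ?_
    intro k hk hka
    have hlt := lin_pos Q' Q'' P2 hπ (lt_aQ'' Q' Q'' P2 y)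
    have hk2 : k = π.symm (aE Q' Q'' P2) := by rw [← hka, Equiv.symm_apply_apply]
    rw [hk2] at hk
    omega
  · refine lemB (Pord Q' Q'' P2) (P'ord Q' Q'' P2) (aE Q' Q'' P2) (bE Q' Q'' P2)
      (Mc Q' Q'' P2) (hagree_c Q' Q'' P2) (hMa_c Q' Q'' P2) (hMb_c Q' Q'' P2)
      (hMcl_c Q' Q'' P2) (Fintype.card (Gam Q' Q'' P2))
      (↑(π.symm (Sum.inr z))) π (Nat.le_add_left _ _) ?_
    intro hi
    have h : π (π.symm (Sum.inr z)) ∈ Mc Q' Q'' P2 := by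
      rw [π.apply_symm_apply (Sum.inr z)]
      exact ⟨z, rfl⟩
    exact h

lemma case3 {π : Listing (Gam Q' Q'' P2)} (hπ : linP Q' Q'' P2 π) :
    promP' Q' Q'' P2 (π.symm (aE Q' Q'' P2)) π
      = hatL Q' Q'' P2 (promP Q' Q'' P2 (π.symm (aE Q' Q'' P2)) π) := by
  refine lemC2 (Pord Q' Q'' P2) (P'ord Q' Q'' P2) (aE Q' Q'' P2) (bE Q' Q'' P2)
    (hab_c Q' Q'' P2) (hagree_c Q' Q'' P2) (hba_c Q' Q'' P2) (hCab_c Q' Q'' P2)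
    (hC'ab_c Q' Q'' P2) (Mc Q' Q'' P2) (hMab_c Q' Q'' P2)
    (Fintype.card (Gam Q' Q'' P2)) (↑(π.symm (aE Q' Q'' P2))) π
    (π.symm (bE Q' Q'' P2)) (π.apply_symm_apply _)
    ((Nat.le_of_lt (π.symm (bE Q' Q'' P2)).isLt).trans (Nat.le_add_left _ _))
    (posa_lt_posb Q' Q'' P2 hπ) (π.symm (aE Q' Q'' P2)).isLt ?_ ?_
  · exact π.apply_symm_apply _
  · intro k hk1 hk2
    exact betM Q' Q'' P2 hπ k hk1 hk2

lemma case4 {π : Listing (Gam Q' Q'' P2)} (hπ : linP Q' Q'' P2 π) :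
    promP' Q' Q'' P2 (π.symm (bE Q' Q'' P2)) π
      = promP Q' Q'' P2 (π.symm (bE Q' Q'' P2)) π := by
  refine lemA (Pord Q' Q'' P2) (P'ord Q' Q'' P2) (aE Q' Q'' P2) (bE Q' Q'' P2)
    (hagree_c Q' Q'' P2) (Fintype.card (Gam Q' Q'' P2))
    (↑(π.symm (bE Q' Q'' P2))) π (Nat.le_add_left _ _) ?_
  intro k hk hka
  have hlt := posa_lt_posb Q' Q'' P2 hπ
  have hk2 : k = π.symm (aE Q' Q'' P2) := by rw [← hka, Equiv.symm_apply_apply]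
  rw [hk2] at hk
  omega

lemma hat_ne_symm {π : Listing (Gam Q' Q'' P2)} {κ : Gam Q' Q'' P2}
    (h1 : κ ≠ aE Q' Q'' P2) (h2 : κ ≠ bE Q' Q'' P2) :
    (hatL Q' Q'' P2 π).symm κ = π.symm κ := by
  rw [hat_symm_apply, Equiv.swap_apply_of_ne_of_ne h1 h2]

end Wrappers

/-- Let `P = Q' ⊕ a ⊕ b ⊕ Q'' + P₂` and `P'` be `P` with the
covering relation `a ≺ b` removed.  Then `L(P') = {π, π̂ : π ∈ L(P)}` where `π̂`
interchanges `a` and `b`, so `|L(P')| = 2|L(P)|`; and the promotion graphs are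
related by: (1) for `k ≺_P a`, `π →^{x_k} π̃` in `G_P` gives `π →^{x_k} π̃̂` and
`π̂ →^{x_k} π̃` in `G_{P'}`; (2) for `k ⪯̸_P a, b`, it gives `π →^{x_k} π̃` and
`π̂ →^{x_k} π̃̂`; (3) `π →^{x_a} π̃` gives `π →^{x_a} π̃̂` and `π̂ →^{x_b} π̃`;
(4) `π →^{x_b} π̃` gives `π →^{x_b} π̃` and `π̂ →^{x_a} π̃̂`. -/
theorem stmt19 :
    (∀ σ : Listing (Gam Q' Q'' P2),
      linP' Q' Q'' P2 σ ↔
        ∃ π : Listing (Gam Q' Q'' P2), linP Q' Q'' P2 π ∧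
          (σ = π ∨ σ = hatL Q' Q'' P2 π)) ∧
    Nat.card {σ : Listing (Gam Q' Q'' P2) // linP' Q' Q'' P2 σ}
      = 2 * Nat.card {π : Listing (Gam Q' Q'' P2) // linP Q' Q'' P2 π} ∧
    (∀ π : Listing (Gam Q' Q'' P2), linP Q' Q'' P2 π →
      (∀ κ : Gam Q' Q'' P2, ltP Q' Q'' P2 κ (aE Q' Q'' P2) →
        promP' Q' Q'' P2 (π.symm κ) π
            = hatL Q' Q'' P2 (promP Q' Q'' P2 (π.symm κ) π) ∧
        promP' Q' Q'' P2 ((hatL Q' Q'' P2 π).symm κ) (hatL Q' Q'' P2 π)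
            = promP Q' Q'' P2 (π.symm κ) π) ∧
      (∀ κ : Gam Q' Q'' P2,
        ¬ leP Q' Q'' P2 κ (aE Q' Q'' P2) → ¬ leP Q' Q'' P2 κ (bE Q' Q'' P2) →
        promP' Q' Q'' P2 (π.symm κ) π = promP Q' Q'' P2 (π.symm κ) π ∧
        promP' Q' Q'' P2 ((hatL Q' Q'' P2 π).symm κ) (hatL Q' Q'' P2 π)
            = hatL Q' Q'' P2 (promP Q' Q'' P2 (π.symm κ) π)) ∧
      (promP' Q' Q'' P2 (π.symm (aE Q' Q'' P2)) π
          = hatL Q' Q'' P2 (promP Q' Q'' P2 (π.symm (aE Q' Q'' P2)) π) ∧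
       promP' Q' Q'' P2 ((hatL Q' Q'' P2 π).symm (bE Q' Q'' P2)) (hatL Q' Q'' P2 π)
          = promP Q' Q'' P2 (π.symm (aE Q' Q'' P2)) π) ∧
      (promP' Q' Q'' P2 (π.symm (bE Q' Q'' P2)) π
          = promP Q' Q'' P2 (π.symm (bE Q' Q'' P2)) π ∧
       promP' Q' Q'' P2 ((hatL Q' Q'' P2 π).symm (aE Q' Q'' P2)) (hatL Q' Q'' P2 π)
          = hatL Q' Q'' P2 (promP Q' Q'' P2 (π.symm (bE Q' Q'' P2)) π))) := by
  refine ⟨?_, ?_, ?_⟩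
  · -- characterization of L(P')
    intro σ
    constructor
    · intro h
      rcases lt_trichotomy ((σ.symm (aE Q' Q'' P2) : Fin _) : ℕ)
        ((σ.symm (bE Q' Q'' P2) : Fin _) : ℕ) with hlt | heq | hgt
      · exact ⟨σ, lin_of_lin' Q' Q'' P2 h hlt, Or.inl rfl⟩
      · exfalso
        have h2 : σ.symm (aE Q' Q'' P2) = σ.symm (bE Q' Q'' P2) := Fin.ext heq
        exact hab_c Q' Q'' P2 (by
          rw [← σ.apply_symm_apply (aE Q' Q'' P2), h2, σ.apply_symm_apply])
      · exact ⟨hatL Q' Q'' P2 σ, lin_hat_of_lin' Q' Q'' P2 h hgt,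
          Or.inr (hat_hat Q' Q'' P2 σ).symm⟩
    · rintro ⟨π, hπ, rfl | rfl⟩
      · exact lin'_of_lin Q' Q'' P2 hπ
      · exact lin'_hat Q' Q'' P2 (lin'_of_lin Q' Q'' P2 hπ)
  · -- cardinality
    have e : Bool × {π : Listing (Gam Q' Q'' P2) // linP Q' Q'' P2 π} ≃
        {σ : Listing (Gam Q' Q'' P2) // linP' Q' Q'' P2 σ} :=
      { toFun := fun cp => match cp with
          | (false, π) => ⟨π.1, lin'_of_lin Q' Q'' P2 π.2⟩
          | (true, π) => ⟨hatL Q' Q'' P2 π.1,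
              lin'_hat Q' Q'' P2 (lin'_of_lin Q' Q'' P2 π.2)⟩
        invFun := fun σ =>
          if h : ((σ.1.symm (aE Q' Q'' P2) : Fin _) : ℕ) <
              ((σ.1.symm (bE Q' Q'' P2) : Fin _) : ℕ)
          then (false, ⟨σ.1, lin_of_lin' Q' Q'' P2 σ.2 h⟩)
          else (true, ⟨hatL Q' Q'' P2 σ.1, lin_hat_of_lin' Q' Q'' P2 σ.2 (by
            have hne : ((σ.1.symm (aE Q' Q'' P2) : Fin _) : ℕ) ≠
                ((σ.1.symm (bE Q' Q'' P2) : Fin _) : ℕ) := by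
              intro hh
              exact hab_c Q' Q'' P2 (by
                rw [← σ.1.apply_symm_apply (aE Q' Q'' P2), Fin.ext hh,
                  σ.1.apply_symm_apply])
            omega)⟩)
        left_inv := by
          rintro ⟨c, π, hπ⟩
          rcases c
          · exact dif_pos (posa_lt_posb Q' Q'' P2 hπ)
          · have hpos : ¬ (((hatL Q' Q'' P2 π).symm (aE Q' Q'' P2) : Fin _) : ℕ) <
                (((hatL Q' Q'' P2 π).symm (bE Q' Q'' P2) : Fin _) : ℕ) := by
              rw [hat_symm_apply, hat_symm_apply, Equiv.swap_apply_left,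
                Equiv.swap_apply_right]
              have := posa_lt_posb Q' Q'' P2 hπ
              omega
            dsimp only
            rw [dif_neg hpos]
            exact Prod.ext rfl (Subtype.ext (hat_hat Q' Q'' P2 π))
        right_inv := by
          rintro ⟨σ, hσ⟩
          by_cases h : ((σ.symm (aE Q' Q'' P2) : Fin _) : ℕ) <
              ((σ.symm (bE Q' Q'' P2) : Fin _) : ℕ)
          · dsimp only
            rw [dif_pos h]
          · dsimp only
            rw [dif_neg h]
            exact Subtype.ext (hat_hat Q' Q'' P2 σ) }
    calc Nat.card {σ : Listing (Gam Q' Q'' P2) // linP' Q' Q'' P2 σ}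
        = Nat.card (Bool × {π : Listing (Gam Q' Q'' P2) // linP Q' Q'' P2 π}) :=
          (Nat.card_congr e).symm
      _ = Nat.card Bool * Nat.card {π : Listing (Gam Q' Q'' P2) // linP Q' Q'' P2 π} :=
          Nat.card_prod _ _
      _ = 2 * Nat.card {π : Listing (Gam Q' Q'' P2) // linP Q' Q'' P2 π} := by
          rw [Nat.card_eq_fintype_card, Fintype.card_bool]
  · -- promotion graph relations
    intro π hπ
    refine ⟨?_, ?_, ?_, ?_⟩
    · intro κ hκ
      have hκa : κ ≠ aE Q' Q'' P2 := ((ltP_iff Q' Q'' P2 κ (aE Q' Q'' P2)).mp hκ).2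
      have hκb : κ ≠ bE Q' Q'' P2 := fun h =>
        not_le_b_a Q' Q'' P2 (h ▸ ((ltP_iff Q' Q'' P2 κ (aE Q' Q'' P2)).mp hκ).1)
      refine ⟨case1 Q' Q'' P2 hπ hκ, ?_⟩
      rw [hat_ne_symm Q' Q'' P2 hκa hκb, auto_hat, case1 Q' Q'' P2 hπ hκ,
        hat_hat]
    · intro κ h1 h2
      have hκa : κ ≠ aE Q' Q'' P2 := fun h =>
        h1 (by rw [h]; exact leP_refl Q' Q'' P2 _)
      have hκb : κ ≠ bE Q' Q'' P2 := fun h =>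
        h2 (by rw [h]; exact leP_refl Q' Q'' P2 _)
      refine ⟨case2 Q' Q'' P2 hπ h1 h2, ?_⟩
      rw [hat_ne_symm Q' Q'' P2 hκa hκb, auto_hat, case2 Q' Q'' P2 hπ h1 h2]
    · refine ⟨case3 Q' Q'' P2 hπ, ?_⟩
      have hsymm : (hatL Q' Q'' P2 π).symm (bE Q' Q'' P2) = π.symm (aE Q' Q'' P2) := by
        rw [hat_symm_apply, Equiv.swap_apply_right]
      rw [hsymm, auto_hat, case3 Q' Q'' P2 hπ, hat_hat]
    · refine ⟨case4 Q' Q'' P2 hπ, ?_⟩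
      have hsymm : (hatL Q' Q'' P2 π).symm (aE Q' Q'' P2) = π.symm (bE Q' Q'' P2) := by
        rw [hat_symm_apply, Equiv.swap_apply_left]
      rw [hsymm, auto_hat, case4 Q' Q'' P2 hπ]

end PromoMC
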